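/- With positive constants α₃, α₄, β₂, η₃, b, λ₀, c, η₁, η₂, set σ = c(η₁ + η₂) and P₃(A) = α₄σA³ + (α₄ + bη₃λ₀ + α₃σ)A² + (α₄β₂ + α₃ − bλ₀)A + α₃β₂. Then P₃(ω/η₃) > 0 for every ω > 1; in particular no root of P₃ lies in (1/η₃, ∞). -/
import Mathlib

open Set

/-- P₃(ω/η₃) > 0 for every ω > 1, so no root of P₃ lies in (1/η₃, ∞). -/
theorem stmt9 (α3 α4 β2 η3 b lam0 c η1 η2 : ℝ)
    (hα3 : 0 < α3) (hα4 : 0 < α4) (hβ2 : 0 < β2) (hη3 : 0 < η3)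
    (hb : 0 < b) (hlam0 : 0 < lam0) (hc : 0 < c) (hη1 : 0 < η1) (hη2 : 0 < η2)
    (σ : ℝ) (hσ : σ = c * (η1 + η2))
    (P3 : ℝ → ℝ)
    (hP3 : ∀ A, P3 A = α4 * σ * A ^ 3 + (α4 + b * η3 * lam0 + α3 * σ) * A ^ 2
      + (α4 * β2 + α3 - b * lam0) * A + α3 * β2) :
    (∀ ω : ℝ, 1 < ω → 0 < P3 (ω / η3)) ∧
    (∀ A : ℝ, 1 / η3 < A → P3 A ≠ 0) := by
  have hσ' : 0 < σ := by rw [hσ]; positivity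
  have key : ∀ A : ℝ, 1 / η3 < A → 0 < P3 A := by
    intro A hA
    have hA0 : 0 < A := lt_trans (by positivity) hA
    have h1 : 1 < η3 * A := by
      rw [div_lt_iff₀ hη3] at hA; linarith [hA]
    rw [hP3]
    nlinarith [mul_pos hα4 (mul_pos hσ' (pow_pos hA0 3)),
      mul_pos hα4 (pow_pos hA0 2), mul_pos hα3 (mul_pos hσ' (pow_pos hA0 2)),
      mul_pos (mul_pos hα4 hβ2) hA0, mul_pos hα3 hA0,
      mul_pos (mul_pos hb hlam0) (mul_pos hA0 (sub_pos.mpr h1))]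
  refine ⟨fun ω hω => key _ ?_, fun A hA => ne_of_gt (key A hA)⟩
  rw [div_lt_div_iff₀ hη3 hη3]
  nlinarith
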